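/- For every odd integer r = 2m+1 ≥ 3 and every integer j with 0 ≤ j ≤ m−1, the real number (−1)^j · ({m}³/{1}) · ( ∏_{k=1}^{j} {m+k}·{m−k} )³ · ({j}!/{2j+1}!)² is strictly positive. Consequently, all summands in Habiro's formula J(r) = Σ_{j=0}^{m−1} (−1)^j ({m}³/{1}) (∏_{k=1}^{j} {m+k}{m−k})³ ({j}!/{2j+1}!)² for the value at t = e^{4πi/r} of the colored Jones polynomial of the Borromean rings with all components colored by m have the same sign, and |J(r)| equals the sum of the absolute values of its summands. -/

import Mathlib

open Real

/-- `{n} = 2 sin(2πn/r)`. -/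
noncomputable def qs (r n : ℕ) : ℝ := 2 * Real.sin (2 * π * n / r)

/-- `{n}! = ∏_{k=1}^{n} {k}`, with `{0}! = 1`. -/
noncomputable def qsf (r n : ℕ) : ℝ := ∏ k ∈ Finset.Icc 1 n, qs r k

/-- The `j`-th summand of Habiro's formula for the value at `t = e^{4πi/(2m+1)}` of the
colored Jones polynomial of the Borromean rings with all components colored by `m`. -/
noncomputable def borSummand (m j : ℕ) : ℝ :=
  (-1:ℝ)^j * ((qs (2*m+1) m)^3 / qs (2*m+1) 1) *
    (∏ k ∈ Finset.Icc 1 j, qs (2*m+1) (m+k) * qs (2*m+1) (m-k))^3 *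
    (qsf (2*m+1) j / qsf (2*m+1) (2*j+1))^2

lemma qs_pos (m k : ℕ) (h1 : 1 ≤ k) (h2 : 2*k < 2*m+1) : 0 < qs (2*m+1) k := by
  unfold qs
  have hk : (1:ℝ) ≤ k := by exact_mod_cast h1
  have h2' : (2:ℝ)*k < 2*m+1 := by exact_mod_cast h2
  have hr : (0:ℝ) < (2*m+1 : ℕ) := by positivity
  have hθpos : 0 < 2*π*k/((2*m+1 : ℕ):ℝ) := by
    apply div_pos _ hr
    nlinarith [pi_pos]
  have hθlt : 2*π*k/((2*m+1 : ℕ):ℝ) < π := by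
    rw [div_lt_iff₀ hr]
    push_cast
    nlinarith [pi_pos]
  have := Real.sin_pos_of_pos_of_lt_pi hθpos hθlt
  linarith

lemma qs_neg (m n : ℕ) (h1 : 2*m+1 < 2*n) (h2 : n < 2*m+1) : qs (2*m+1) n < 0 := by
  unfold qs
  have h1' : (2:ℝ)*m+1 < 2*n := by exact_mod_cast h1
  have h2' : (n:ℝ) < 2*m+1 := by exact_mod_cast h2
  have hr : (0:ℝ) < (2*m+1 : ℕ) := by positivity
  set θ : ℝ := 2*π*n/((2*m+1 : ℕ):ℝ) with hθ
  have hgt : π < θ := by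
    rw [hθ, lt_div_iff₀ hr]
    push_cast
    nlinarith [pi_pos]
  have hlt : θ < 2*π := by
    rw [hθ, div_lt_iff₀ hr]
    push_cast
    nlinarith [pi_pos]
  have hsin : 0 < Real.sin (θ - π) :=
    Real.sin_pos_of_pos_of_lt_pi (by linarith) (by linarith)
  rw [Real.sin_sub_pi] at hsin
  linarith

lemma qs_ne_zero (m k : ℕ) (h1 : 1 ≤ k) (h2 : k ≤ 2*m) : qs (2*m+1) k ≠ 0 := by
  rcases lt_or_ge (2*k) (2*m+1) with h | h
  · exact (qs_pos m k h1 h).ne'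
  · have : 2*m+1 < 2*k := by omega
    exact (qs_neg m k this (by omega)).ne

lemma qsf_ne_zero (m n : ℕ) (h : n ≤ 2*m) : qsf (2*m+1) n ≠ 0 := by
  unfold qsf
  rw [Finset.prod_ne_zero_iff]
  intro k hk
  rw [Finset.mem_Icc] at hk
  exact qs_ne_zero m k hk.1 (le_trans hk.2 h)

/-- All summands of Habiro's formula for the Borromean rings colored by `m` are strictly
positive; in particular they have the same sign and the absolute value of the sum is the
sum of the absolute values. -/
theorem stmt5 (m : ℕ) (hm : 1 ≤ m) :
    (∀ j ∈ Finset.range m, 0 < borSummand m j) ∧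
      |∑ j ∈ Finset.range m, borSummand m j|
        = ∑ j ∈ Finset.range m, |borSummand m j| := by
  have key : ∀ j ∈ Finset.range m, 0 < borSummand m j := by
    intro j hj
    rw [Finset.mem_range] at hj
    unfold borSummand
    have hA : 0 < (qs (2*m+1) m)^3 / qs (2*m+1) 1 := by
      apply div_pos
      · exact pow_pos (qs_pos m m hm (by omega)) 3
      · exact qs_pos m 1 le_rfl (by omega)
    set P : ℝ := ∏ k ∈ Finset.Icc 1 j, qs (2*m+1) (m+k) * qs (2*m+1) (m-k) with hP
    have hfac : ∀ k ∈ Finset.Icc 1 j, qs (2*m+1) (m+k) * qs (2*m+1) (m-k) < 0 := by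
      intro k hk
      rw [Finset.mem_Icc] at hk
      apply mul_neg_of_neg_of_pos
      · exact qs_neg m (m+k) (by omega) (by omega)
      · exact qs_pos m (m-k) (by omega) (by omega)
    have hcard : (Finset.Icc 1 j).card = j := by simp [Nat.card_Icc]
    have hnegprod : 0 < (-1:ℝ)^j * P := by
      have hpos : 0 < ∏ k ∈ Finset.Icc 1 j, (-(qs (2*m+1) (m+k) * qs (2*m+1) (m-k))) :=
        Finset.prod_pos fun k hk => neg_pos.mpr (hfac k hk)
      have heq : ∏ k ∈ Finset.Icc 1 j, (-(qs (2*m+1) (m+k) * qs (2*m+1) (m-k)))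
          = (-1:ℝ)^j * P := by
        calc ∏ k ∈ Finset.Icc 1 j, (-(qs (2*m+1) (m+k) * qs (2*m+1) (m-k)))
            = ∏ k ∈ Finset.Icc 1 j, ((-1:ℝ) * (qs (2*m+1) (m+k) * qs (2*m+1) (m-k))) := by
              simp
          _ = (∏ _k ∈ Finset.Icc 1 j, (-1:ℝ)) * P := Finset.prod_mul_distrib
          _ = (-1:ℝ)^j * P := by rw [Finset.prod_const, hcard]
      rwa [heq] at hpos
    set B : ℝ := qsf (2*m+1) j / qsf (2*m+1) (2*j+1) with hB
    have hBne : B ≠ 0 :=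
      div_ne_zero (qsf_ne_zero m j (by omega)) (qsf_ne_zero m (2*j+1) (by omega))
    have hB2 : 0 < B^2 := lt_of_le_of_ne (sq_nonneg B) (Ne.symm (pow_ne_zero 2 hBne))
    have hrw : (-1:ℝ)^j * ((qs (2*m+1) m)^3 / qs (2*m+1) 1) * P^3 * B^2
        = ((qs (2*m+1) m)^3 / qs (2*m+1) 1) * ((-1:ℝ)^j * P)^3 * B^2 := by
      have h3 : ((-1:ℝ)^j)^3 = (-1:ℝ)^j := by
        rcases Nat.even_or_odd j with h | h
        · rw [h.neg_one_pow]; norm_num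
        · rw [h.neg_one_pow]; norm_num
      rw [mul_pow, h3]; ring
    rw [hrw]
    exact mul_pos (mul_pos hA (pow_pos hnegprod 3)) hB2
  refine ⟨key, ?_⟩
  rw [abs_of_nonneg (Finset.sum_nonneg fun j hj => (key j hj).le)]
  exact Finset.sum_congr rfl fun j hj => (abs_of_pos (key j hj)).symm
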